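/- The number of collinear triples of grid points containing the origin o = (1,1) in [n]² is at least c·n² log n for some absolute constant c > 0 and n sufficiently large. -/

import Mathlib

open Finset


-- swap symmetry
lemma card_lt_eq_card_gt (s : Finset ℕ) :
    ((s ×ˢ s).filter fun p => p.1 < p.2).card = ((s ×ˢ s).filter fun p => p.2 < p.1).card := by
  apply Finset.card_bij (fun p _ => Prod.swap p)
  · rintro ⟨a,b⟩ hp
    simp only [mem_filter, mem_product] at hp ⊢
    exact ⟨⟨hp.1.2, hp.1.1⟩, hp.2⟩
  · rintro ⟨a,b⟩ _ ⟨c,d⟩ _ h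
    simpa [Prod.ext_iff, and_comm] using h
  · rintro ⟨a,b⟩ hp
    refine ⟨⟨b,a⟩, ?_, rfl⟩
    simp only [mem_filter, mem_product] at hp ⊢
    exact ⟨⟨hp.1.2, hp.1.1⟩, hp.2⟩

lemma two_card_lt_le (s : Finset ℕ) :
    2 * ((s ×ˢ s).filter fun p => p.1 < p.2).card ≤ s.card ^ 2 := by
  have hdisj : Disjoint ((s ×ˢ s).filter fun p => p.1 < p.2)
      ((s ×ˢ s).filter fun p => p.2 < p.1) := by
    rw [Finset.disjoint_left]
    rintro ⟨a,b⟩ hp hq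
    simp only [mem_filter] at hp hq
    omega
  have := Finset.card_union_of_disjoint hdisj  -- may be card_union_eq or similar
  have hsub : ((s ×ˢ s).filter fun p => p.1 < p.2) ∪ ((s ×ˢ s).filter fun p => p.2 < p.1) ⊆ s ×ˢ s := by
    apply Finset.union_subset <;> exact Finset.filter_subset _ _
  have hle := Finset.card_le_card hsub
  rw [this] at hle
  rw [card_lt_eq_card_gt] at *
  have : (s ×ˢ s).card = s.card ^ 2 := by rw [Finset.card_product]; ring
  omega

lemma two_card_lt_ge (s : Finset ℕ) :
    s.card ^ 2 ≤ 2 * ((s ×ˢ s).filter fun p => p.1 < p.2).card + s.card := by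
  have hcov : s ×ˢ s ⊆ ((s ×ˢ s).filter fun p => p.1 < p.2) ∪ (((s ×ˢ s).filter fun p => p.2 < p.1) ∪ ((s ×ˢ s).filter fun p => p.1 = p.2)) := by
    rintro ⟨a,b⟩ hp
    simp only [Finset.mem_union, mem_filter]
    rcases lt_trichotomy a b with h|h|h
    · exact Or.inl ⟨hp, h⟩
    · exact Or.inr (Or.inr ⟨hp, h⟩)
    · exact Or.inr (Or.inl ⟨hp, h⟩)
  have h1 := Finset.card_le_card hcov
  have h2 := Finset.card_union_le ((s ×ˢ s).filter fun p => p.1 < p.2) (((s ×ˢ s).filter fun p => p.2 < p.1) ∪ ((s ×ˢ s).filter fun p => p.1 = p.2))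
  have h3 := Finset.card_union_le ((s ×ˢ s).filter fun p => p.2 < p.1) ((s ×ˢ s).filter fun p => p.1 = p.2)
  have hdiag : ((s ×ˢ s).filter fun p => p.1 = p.2).card ≤ s.card := by
    apply Finset.card_le_card_of_injOn Prod.fst
    · rintro ⟨a,b⟩ hp
      simp only [mem_filter, mem_product, Finset.mem_coe] at hp ⊢
      exact hp.1.1
    · rintro ⟨a,b⟩ hp ⟨c,d⟩ hq h
      have h1 : a = b := (Finset.mem_filter.mp hp).2
      have h2 : c = d := (Finset.mem_filter.mp hq).2
      have h3 : a = c := h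
      rw [Prod.ext_iff]
      exact ⟨h3, by rw [← h1, ← h2, h3]⟩
  have heq := card_lt_eq_card_gt s
  have : (s ×ˢ s).card = s.card ^ 2 := by rw [Finset.card_product]; ring
  omega

lemma sum_inv_sq_aux (L : ℕ) (hL : 4 ≤ L) :
    ∑ d ∈ Finset.Icc 2 L, (1:ℝ)/(d^2) ≤ 97/144 - 1/L := by
  induction L, hL using Nat.le_induction with
  | base =>
    have : Finset.Icc 2 4 = {2,3,4} := by decide
    rw [this]
    norm_num
  | succ L hL ih =>
    rw [Finset.sum_Icc_succ_top (by omega : 2 ≤ L + 1)]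
    have hL0 : (0:ℝ) < L := by
      have : (4:ℝ) ≤ L := by exact_mod_cast hL
      linarith
    have hL1 : (0:ℝ) < (L:ℝ) + 1 := by linarith
    have h1 : (1:ℝ)/(((L:ℝ)+1)^2) ≤ 1/L - 1/(L+1) := by
      rw [div_sub_div _ _ (ne_of_gt hL0) (ne_of_gt hL1)]
      rw [div_le_div_iff₀ (by positivity) (by positivity)]
      ring_nf
      nlinarith
    have hcast : ((L:ℝ)+1) = ((L+1 : ℕ) : ℝ) := by push_cast; ring
    calc ∑ d ∈ Finset.Icc 2 L, (1:ℝ)/(d^2) + 1/(((L+1):ℕ):ℝ)^2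
        ≤ (97/144 - 1/L) + 1/(((L:ℝ)+1)^2) := by rw [← hcast]; linarith
      _ ≤ 97/144 - 1/(((L+1):ℕ):ℝ) := by rw [← hcast]; linarith

lemma sum_inv_sq_le (L : ℕ) : ∑ d ∈ Finset.Icc 2 L, (1:ℝ)/(d^2) ≤ 97/144 := by
  rcases le_or_gt L 3 with h | h
  · interval_cases L
    · simp; norm_num
    · simp; norm_num
    · norm_num
    · have : Finset.Icc 2 3 = {2,3} := by decide
      rw [this]; norm_num
  · have := sum_inv_sq_aux L (by omega)
    have h0 : (0:ℝ) ≤ 1/L := by positivity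
    linarith


def pairsK (K : ℕ) : Finset (ℕ × ℕ) :=
  (Finset.Icc 1 (2*K) ×ˢ Finset.Ioc K (2*K)).filter fun p => p.1 < p.2 ∧ Nat.Coprime p.1 p.2

lemma pairsK_card (K : ℕ) (hK : 36 ≤ K) : (K:ℝ)^2/8 ≤ (pairsK K).card := by
  classical
  set dom := Finset.Icc 1 (2*K) ×ˢ Finset.Ioc K (2*K) with hdom
  set A := dom.filter (fun p => p.1 < p.2) with hA
  -- A splits into pairsK and noncoprime part
  have hsplit : (pairsK K).card + (A.filter (fun p => ¬ Nat.Coprime p.1 p.2)).card = A.card := by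
    have h1 : pairsK K = A.filter (fun p => Nat.Coprime p.1 p.2) := by
      rw [hA, Finset.filter_filter]; rfl
    rw [h1]
    exact Finset.card_filter_add_card_filter_not _
  -- lower bound for A
  have hB1 : Finset.Icc 1 K ×ˢ Finset.Ioc K (2*K) ⊆ A := by
    rintro ⟨a,b⟩ hp
    simp only [Finset.mem_product, Finset.mem_Icc, Finset.mem_Ioc] at hp
    simp only [hA, hdom, Finset.mem_filter, Finset.mem_product, Finset.mem_Icc, Finset.mem_Ioc]
    omega
  have hB2 : (Finset.Ioc K (2*K) ×ˢ Finset.Ioc K (2*K)).filter (fun p => p.1 < p.2) ⊆ A := by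
    rintro ⟨a,b⟩ hp
    simp only [Finset.mem_filter, Finset.mem_product, Finset.mem_Ioc] at hp
    simp only [hA, hdom, Finset.mem_filter, Finset.mem_product, Finset.mem_Icc, Finset.mem_Ioc]
    omega
  have hdisj : Disjoint (Finset.Icc 1 K ×ˢ Finset.Ioc K (2*K))
      ((Finset.Ioc K (2*K) ×ˢ Finset.Ioc K (2*K)).filter (fun p => p.1 < p.2)) := by
    rw [Finset.disjoint_left]
    rintro ⟨a,b⟩ hp hq
    simp only [Finset.mem_product, Finset.mem_Icc, Finset.mem_Ioc] at hp
    simp only [Finset.mem_filter, Finset.mem_product, Finset.mem_Ioc] at hq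
    omega
  have hAcard : (Finset.Icc 1 K ×ˢ Finset.Ioc K (2*K)).card
      + ((Finset.Ioc K (2*K) ×ˢ Finset.Ioc K (2*K)).filter (fun p => p.1 < p.2)).card ≤ A.card := by
    rw [← Finset.card_union_of_disjoint hdisj]
    exact Finset.card_le_card (Finset.union_subset hB1 hB2)
  have hB1card : (Finset.Icc 1 K ×ˢ Finset.Ioc K (2*K)).card = K * K := by
    rw [Finset.card_product, Nat.card_Icc, Nat.card_Ioc]
    congr 1 <;> omega
  have hIoc : (Finset.Ioc K (2*K)).card = K := by rw [Nat.card_Ioc]; omega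
  have hB2card := two_card_lt_ge (Finset.Ioc K (2*K))
  rw [hIoc] at hB2card
  -- A.card ≥ K*K + (K^2 - K)/2 : in nat, 2*A.card ≥ 2*K*K + K^2 - K
  -- noncoprime bound
  set NC := A.filter (fun p => ¬ Nat.Coprime p.1 p.2) with hNC
  set Dd := fun d => (Finset.Icc 1 (2*K) ×ˢ Finset.Icc 1 (2*K)).filter
      (fun p => p.1 < p.2 ∧ d ∣ p.1 ∧ d ∣ p.2) with hDd
  have hNCsub : NC ⊆ (Finset.Icc 2 (2*K)).biUnion Dd := by
    rintro ⟨a,b⟩ hp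
    rw [hNC, Finset.mem_filter] at hp
    obtain ⟨hpA, hncop⟩ := hp
    rw [hA, Finset.mem_filter] at hpA
    obtain ⟨hpd, hab⟩ := hpA
    rw [hdom, Finset.mem_product] at hpd
    simp only [Finset.mem_Icc, Finset.mem_Ioc] at hpd
    obtain ⟨⟨ha1, ha2⟩, hb1, hb2⟩ := hpd
    simp only at hab hncop
    have hg1 : 1 ≤ Nat.gcd a b := Nat.one_le_iff_ne_zero.mpr (by
      intro h
      have := Nat.eq_zero_of_gcd_eq_zero_left h
      omega)
    have hg2 : 2 ≤ Nat.gcd a b := by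
      by_contra h
      have h1 : Nat.gcd a b = 1 := by omega
      exact hncop h1
    have hgle : Nat.gcd a b ≤ 2*K := le_trans (Nat.gcd_le_left b (by omega)) ha2
    rw [Finset.mem_biUnion]
    refine ⟨Nat.gcd a b, by simp [Finset.mem_Icc]; omega, ?_⟩
    simp only [hDd, Finset.mem_filter, Finset.mem_product, Finset.mem_Icc]
    exact ⟨⟨⟨ha1, ha2⟩, by omega, by omega⟩, hab, Nat.gcd_dvd_left a b, Nat.gcd_dvd_right a b⟩
  have hNCcard : NC.card ≤ ∑ d ∈ Finset.Icc 2 (2*K), (Dd d).card :=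
    le_trans (Finset.card_le_card hNCsub) (Finset.card_biUnion_le)
  -- each Dd d
  have hDdcard : ∀ d ∈ Finset.Icc 2 (2*K), ((Dd d).card : ℝ) ≤ 2*K^2/d^2 := by
    intro d hd
    simp only [Finset.mem_Icc] at hd
    set md := (Finset.Icc 1 (2*K)).filter (fun x => d ∣ x) with hmd
    have hsub : Dd d ⊆ (md ×ˢ md).filter (fun p => p.1 < p.2) := by
      rintro ⟨a,b⟩ hp
      simp only [hDd, Finset.mem_filter, Finset.mem_product] at hp
      simp only [hmd, Finset.mem_filter, Finset.mem_product]
      exact ⟨⟨⟨hp.1.1, hp.2.2.1⟩, hp.1.2, hp.2.2.2⟩, hp.2.1⟩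
    have h2 : 2 * (Dd d).card ≤ md.card ^ 2 :=
      le_trans (Nat.mul_le_mul_left 2 (Finset.card_le_card hsub)) (two_card_lt_le md)
    have hmc : md.card = 2*K/d := by
      rw [hmd, show Finset.Icc 1 (2*K) = Finset.Ioc 0 (2*K) from (Finset.Icc_add_one_left_eq_Ioc (a := 0) (b := 2*K)).symm]
      exact Nat.Ioc_filter_dvd_card_eq_div (2*K) d
    have hd0 : (0:ℝ) < d := by
      have : 2 ≤ d := hd.1
      have : (2:ℝ) ≤ d := by exact_mod_cast this
      linarith
    have hmcr : (md.card : ℝ) ≤ 2*(K:ℝ)/d := by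
      rw [hmc]
      exact_mod_cast Nat.cast_div_le
    have hmcr0 : (0:ℝ) ≤ (md.card : ℝ) := by positivity
    have h2r : 2 * ((Dd d).card : ℝ) ≤ (md.card:ℝ)^2 := by exact_mod_cast h2
    have hsq : (md.card:ℝ)^2 ≤ (2*(K:ℝ)/d)^2 := by
      apply pow_le_pow_left₀ hmcr0 hmcr
    have : (2*(K:ℝ)/d)^2 = 4*K^2/d^2 := by field_simp; ring
    rw [this] at hsq
    have hr : (2:ℝ)*(2*(K:ℝ)^2/(d:ℝ)^2) = 4*(K:ℝ)^2/(d:ℝ)^2 := by ring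
    linarith [h2r, hsq]
  -- combine
  have hNCreal : (NC.card : ℝ) ≤ 97/72 * (K:ℝ)^2 := by
    calc (NC.card : ℝ) ≤ ∑ d ∈ Finset.Icc 2 (2*K), ((Dd d).card : ℝ) := by exact_mod_cast hNCcard
      _ ≤ ∑ d ∈ Finset.Icc 2 (2*K), 2*(K:ℝ)^2/(d:ℝ)^2 := Finset.sum_le_sum hDdcard
      _ = 2*(K:ℝ)^2 * ∑ d ∈ Finset.Icc 2 (2*K), 1/(d:ℝ)^2 := by
          rw [Finset.mul_sum]; apply Finset.sum_congr rfl; intros; ring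
      _ ≤ 2*(K:ℝ)^2 * (97/144) := by
          apply mul_le_mul_of_nonneg_left (sum_inv_sq_le _) (by positivity)
      _ = 97/72 * (K:ℝ)^2 := by ring
  have hc1 : ((pairsK K).card : ℝ) + NC.card = A.card := by exact_mod_cast hsplit
  rw [hB1card] at hAcard
  have hc2 : (K:ℝ)*K + (((Finset.Ioc K (2*K) ×ˢ Finset.Ioc K (2*K)).filter (fun p => p.1 < p.2)).card : ℝ) ≤ (A.card:ℝ) := by
    exact_mod_cast hAcard
  have hc3 : (K:ℝ)^2 ≤ 2 * (((Finset.Ioc K (2*K) ×ˢ Finset.Ioc K (2*K)).filter (fun p => p.1 < p.2)).card : ℝ) + K := by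
    exact_mod_cast hB2card
  have hKr : (36:ℝ) ≤ (K:ℝ) := by exact_mod_cast hK
  nlinarith [hc1, hc2, hc3, hNCreal, hKr]

lemma F_inj {j k v1 v2 j' k' v1' v2' : ℕ}
    (h1 : 1 ≤ j) (h2 : j < k) (h3 : Nat.Coprime j k) (h4 : 1 ≤ v1) (h5 : 1 ≤ v2)
    (h1' : 1 ≤ j') (h2' : j' < k') (h3' : Nat.Coprime j' k') (h4' : 1 ≤ v1') (h5' : 1 ≤ v2')
    (hF : ({((1:ℤ),(1:ℤ)), ((1 + (j:ℤ)*v1), (1 + (j:ℤ)*v2)), ((1 + (k:ℤ)*v1), (1 + (k:ℤ)*v2))} : Finset (ℤ×ℤ))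
        = {((1:ℤ),(1:ℤ)), ((1 + (j':ℤ)*v1'), (1 + (j':ℤ)*v2')), ((1 + (k':ℤ)*v1'), (1 + (k':ℤ)*v2'))}) :
    j = j' ∧ k = k' ∧ v1 = v1' ∧ v2 = v2' := by
  set o : ℤ × ℤ := (1,1) with ho
  set a : ℤ × ℤ := ((1 + (j:ℤ)*v1), (1 + (j:ℤ)*v2)) with ha
  set b : ℤ × ℤ := ((1 + (k:ℤ)*v1), (1 + (k:ℤ)*v2)) with hb
  set a' : ℤ × ℤ := ((1 + (j':ℤ)*v1'), (1 + (j':ℤ)*v2')) with ha'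
  set b' : ℤ × ℤ := ((1 + (k':ℤ)*v1'), (1 + (k':ℤ)*v2')) with hb'
  have hjv1 : (1:ℤ) ≤ (j:ℤ)*v1 := by exact_mod_cast Nat.one_le_iff_ne_zero.mpr (Nat.mul_ne_zero (by omega) (by omega))
  have hkv1 : (1:ℤ) ≤ (k:ℤ)*v1 := by exact_mod_cast Nat.one_le_iff_ne_zero.mpr (Nat.mul_ne_zero (by omega) (by omega))
  have hjv1' : (1:ℤ) ≤ (j':ℤ)*v1' := by exact_mod_cast Nat.one_le_iff_ne_zero.mpr (Nat.mul_ne_zero (by omega) (by omega))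
  have hkv1' : (1:ℤ) ≤ (k':ℤ)*v1' := by exact_mod_cast Nat.one_le_iff_ne_zero.mpr (Nat.mul_ne_zero (by omega) (by omega))
  have hab1 : (j:ℤ)*v1 < (k:ℤ)*v1 := by
    have : j*v1 < k*v1 := (Nat.mul_lt_mul_right (show 0 < v1 by omega)).mpr h2
    exact_mod_cast this
  have hab1' : (j':ℤ)*v1' < (k':ℤ)*v1' := by
    have : j'*v1' < k'*v1' := (Nat.mul_lt_mul_right (show 0 < v1' by omega)).mpr h2'
    exact_mod_cast this
  have hao : a ≠ o := by
    intro h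
    have := congrArg Prod.fst h
    simp [ha, ho] at this
    omega
  have hbo : b ≠ o := by
    intro h
    have := congrArg Prod.fst h
    simp [hb, ho] at this
    omega
  have hma : a = a' ∨ a = b' := by
    have hmem : a ∈ ({o, a', b'} : Finset (ℤ×ℤ)) := by
      rw [← hF]; simp
    simp only [Finset.mem_insert, Finset.mem_singleton] at hmem
    tauto
  have hmb : b = a' ∨ b = b' := by
    have hmem : b ∈ ({o, a', b'} : Finset (ℤ×ℤ)) := by
      rw [← hF]; simp
    simp only [Finset.mem_insert, Finset.mem_singleton] at hmem
    tauto
  have habne : a.1 < b.1 := by simp [ha, hb]; omega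
  have habne' : a'.1 < b'.1 := by simp [ha', hb']; omega
  have key : a = a' ∧ b = b' := by
    rcases hma with h | h
    · refine ⟨h, ?_⟩
      rcases hmb with h' | h'
      · rw [← h] at h'
        rw [h'] at habne
        omega
      · exact h'
    · rcases hmb with h' | h'
      · rw [h, h'] at habne
        omega
      · rw [h, h'] at habne
        omega
  obtain ⟨hA, hB⟩ := key
  have e1 : j*v1 = j'*v1' := by
    have := congrArg Prod.fst hA
    simp only [ha, ha'] at this
    have : (j:ℤ)*v1 = (j':ℤ)*v1' := by linarith [this]
    exact_mod_cast this
  have e2 : j*v2 = j'*v2' := by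
    have := congrArg Prod.snd hA
    simp only [ha, ha'] at this
    have : (j:ℤ)*v2 = (j':ℤ)*v2' := by linarith [this]
    exact_mod_cast this
  have e3 : k*v1 = k'*v1' := by
    have := congrArg Prod.fst hB
    simp only [hb, hb'] at this
    have : (k:ℤ)*v1 = (k':ℤ)*v1' := by linarith [this]
    exact_mod_cast this
  have hcross : j*k' = k*j' := by
    have h6 : (j*k')*v1' = (k*j')*v1' := by
      calc (j*k')*v1' = j*(k'*v1') := by ring
        _ = j*(k*v1) := by rw [e3]
        _ = k*(j*v1) := by ring
        _ = k*(j'*v1') := by rw [e1]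
        _ = (k*j')*v1' := by ring
    exact Nat.eq_of_mul_eq_mul_right (by omega) h6
  have hjj : j = j' := by
    have d1 : j ∣ j' := by
      apply h3.dvd_of_dvd_mul_right
      exact ⟨k', by rw [Nat.mul_comm j' k, ← hcross]⟩
    have d2 : j' ∣ j := by
      apply h3'.dvd_of_dvd_mul_right
      exact ⟨k, by rw [hcross, Nat.mul_comm k j']⟩
    exact Nat.dvd_antisymm d1 d2
  have hv1 : v1 = v1' := by
    rw [hjj] at e1
    exact Nat.eq_of_mul_eq_mul_left (by omega) e1
  have hv2 : v2 = v2' := by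
    rw [hjj] at e2
    exact Nat.eq_of_mul_eq_mul_left (by omega) e2
  have hkk : k = k' := by
    rw [hv1] at e3
    exact Nat.eq_of_mul_eq_mul_right (by omega) e3
  exact ⟨hjj, hkk, hv1, hv2⟩

def inGrid (n : ℕ) (p : ℤ × ℤ) : Prop :=
  1 ≤ p.1 ∧ p.1 ≤ n ∧ 1 ≤ p.2 ∧ p.2 ≤ n

def Collin (a b c : ℤ × ℤ) : Prop :=
  (b.1 - a.1) * (c.2 - a.2) = (b.2 - a.2) * (c.1 - a.1)

def Mv (n i : ℕ) : ℕ := (n-1) / 2^(i+1)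

def shellF (n i : ℕ) : Finset ((ℕ×ℕ)×(ℕ×ℕ)) :=
  pairsK (2^i) ×ˢ (Finset.Icc 1 (Mv n i) ×ˢ Finset.Icc 1 (Mv n i))

def Fmap (x : (ℕ×ℕ)×(ℕ×ℕ)) : Finset (ℤ×ℤ) :=
  {((1:ℤ),(1:ℤ)), ((1 + (x.1.1:ℤ)*x.2.1), (1 + (x.1.1:ℤ)*x.2.2)),
   ((1 + (x.1.2:ℤ)*x.2.1), (1 + (x.1.2:ℤ)*x.2.2))}

lemma mem_shellF {n i : ℕ} {x : (ℕ×ℕ)×(ℕ×ℕ)} (hx : x ∈ shellF n i) :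
    1 ≤ x.1.1 ∧ x.1.1 < x.1.2 ∧ Nat.Coprime x.1.1 x.1.2 ∧ 2^i < x.1.2 ∧ x.1.2 ≤ 2^(i+1)
    ∧ 1 ≤ x.2.1 ∧ x.2.1 ≤ Mv n i ∧ 1 ≤ x.2.2 ∧ x.2.2 ≤ Mv n i := by
  obtain ⟨⟨j,k⟩,v1,v2⟩ := x
  simp only [shellF, pairsK, Finset.mem_product, Finset.mem_filter, Finset.mem_Icc,
    Finset.mem_Ioc] at hx
  have hp : 2 * 2^i = 2^(i+1) := by rw [pow_succ]; ring
  obtain ⟨⟨⟨⟨hj1,hj2⟩,hk1,hk2⟩,hjk,hcop⟩,⟨hv11,hv12⟩,hv21,hv22⟩ := hx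
  simp only at hj1 hj2 hk1 hk2 hjk hcop hv11 hv12 hv21 hv22 ⊢
  exact ⟨hj1, hjk, hcop, hk1, by omega, hv11, hv12, hv21, hv22⟩

lemma shell_bound {n i : ℕ} {x : (ℕ×ℕ)×(ℕ×ℕ)} (hx : x ∈ shellF n i) :
    x.1.2 * x.2.1 ≤ n - 1 ∧ x.1.2 * x.2.2 ≤ n - 1 := by
  obtain ⟨h1,h2,h3,h4,h5,h6,h7,h8,h9⟩ := mem_shellF hx
  constructor
  · calc x.1.2 * x.2.1 ≤ 2^(i+1) * Mv n i := Nat.mul_le_mul h5 h7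
      _ ≤ n - 1 := by rw [Mv, Nat.mul_comm]; exact Nat.div_mul_le_self _ _
  · calc x.1.2 * x.2.2 ≤ 2^(i+1) * Mv n i := Nat.mul_le_mul h5 h9
      _ ≤ n - 1 := by rw [Mv, Nat.mul_comm]; exact Nat.div_mul_le_self _ _

lemma Fmap_mem {n i : ℕ} (hn : 2 ≤ n) {x : (ℕ×ℕ)×(ℕ×ℕ)} (hx : x ∈ shellF n i) :
    ((1:ℤ),(1:ℤ)) ∈ Fmap x ∧ (∀ q ∈ Fmap x, inGrid n q) ∧
      ∃ q r : ℤ × ℤ, Fmap x = {((1:ℤ),(1:ℤ)), q, r} ∧ ((1:ℤ),(1:ℤ)) ≠ q ∧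
        ((1:ℤ),(1:ℤ)) ≠ r ∧ q ≠ r ∧ Collin ((1:ℤ),(1:ℤ)) q r := by
  obtain ⟨⟨j,k⟩,v1,v2⟩ := x
  obtain ⟨h1,h2,h3,h4,h5,h6,h7,h8,h9⟩ := mem_shellF hx
  obtain ⟨hb1, hb2⟩ := shell_bound hx
  simp only at h1 h2 h3 h4 h5 h6 h7 h8 h9 hb1 hb2
  have hkv1 : k*v1 ≤ n - 1 := hb1
  have hkv2 : k*v2 ≤ n - 1 := hb2
  have hjv1 : j*v1 ≤ n - 1 := le_trans (Nat.mul_le_mul_right _ (le_of_lt h2)) hkv1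
  have hjv2 : j*v2 ≤ n - 1 := le_trans (Nat.mul_le_mul_right _ (le_of_lt h2)) hkv2
  have hj1 : 1 ≤ j*v1 := Nat.one_le_iff_ne_zero.mpr (Nat.mul_ne_zero (by omega) (by omega))
  have hj2 : 1 ≤ j*v2 := Nat.one_le_iff_ne_zero.mpr (Nat.mul_ne_zero (by omega) (by omega))
  have hk1 : 1 ≤ k*v1 := Nat.one_le_iff_ne_zero.mpr (Nat.mul_ne_zero (by omega) (by omega))
  have hlt1 : j*v1 < k*v1 := (Nat.mul_lt_mul_right (show 0 < v1 by omega)).mpr h2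
  refine ⟨by simp [Fmap], ?_, ?_⟩
  · intro q hq
    simp only [Fmap, Finset.mem_insert, Finset.mem_singleton] at hq
    have hn' : (2:ℤ) ≤ (n:ℤ) := by exact_mod_cast hn
    have c1 : (1 + j*v1 : ℕ) ≤ n := by omega
    have c2 : (1 + j*v2 : ℕ) ≤ n := by omega
    have c3 : (1 + k*v1 : ℕ) ≤ n := by omega
    have c4 : (1 + k*v2 : ℕ) ≤ n := by omega
    have hk2' : 1 ≤ k*v2 := Nat.one_le_iff_ne_zero.mpr (Nat.mul_ne_zero (by omega) (by omega))
    have d1 : (1:ℤ) ≤ (j:ℤ)*v1 := by exact_mod_cast hj1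
    have d2 : (1:ℤ) ≤ (j:ℤ)*v2 := by exact_mod_cast hj2
    have d3 : (1:ℤ) ≤ (k:ℤ)*v1 := by exact_mod_cast hk1
    have d4 : (1:ℤ) ≤ (k:ℤ)*v2 := by exact_mod_cast hk2'
    have e1 : (1:ℤ) + (j:ℤ)*v1 ≤ n := by exact_mod_cast c1
    have e2 : (1:ℤ) + (j:ℤ)*v2 ≤ n := by exact_mod_cast c2
    have e3 : (1:ℤ) + (k:ℤ)*v1 ≤ n := by exact_mod_cast c3
    have e4 : (1:ℤ) + (k:ℤ)*v2 ≤ n := by exact_mod_cast c4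
    rcases hq with h | h | h <;> subst h <;>
      exact ⟨by simp only; linarith, by simp only; linarith,
             by simp only; linarith, by simp only; linarith⟩
  · refine ⟨((1 + (j:ℤ)*v1), (1 + (j:ℤ)*v2)), ((1 + (k:ℤ)*v1), (1 + (k:ℤ)*v2)), rfl, ?_, ?_, ?_, ?_⟩
    · intro h
      have := congrArg Prod.fst h
      simp only at this
      have h' : (1:ℤ) ≤ (j:ℤ)*v1 := by exact_mod_cast hj1
      omega
    · intro h
      have := congrArg Prod.fst h
      simp only at this
      have h' : (1:ℤ) ≤ (k:ℤ)*v1 := by exact_mod_cast hk1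
      omega
    · intro h
      have := congrArg Prod.fst h
      simp only at this
      have h' : (j:ℤ)*v1 < (k:ℤ)*v1 := by exact_mod_cast hlt1
      omega
    · show ((1 + (j:ℤ)*v1) - 1) * ((1 + (k:ℤ)*v2) - 1) = ((1 + (j:ℤ)*v2) - 1) * ((1 + (k:ℤ)*v1) - 1)
      ring

/-- The number of collinear triples of grid points of `[n]²` containing the origin `o = (1,1)`
is at least `c·n²·log n` for an absolute constant `c > 0` and all sufficiently large `n`. -/
theorem stmt6 :
    ∃ c : ℝ, 0 < c ∧ ∃ N : ℕ, ∀ n : ℕ, N ≤ n →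
      c * n ^ 2 * Real.log n ≤
      ({T : Finset (ℤ × ℤ) | ((1 : ℤ), (1 : ℤ)) ∈ T ∧ (∀ q ∈ T, inGrid n q) ∧
          ∃ q r : ℤ × ℤ, T = {((1 : ℤ), (1 : ℤ)), q, r} ∧ ((1 : ℤ), (1 : ℤ)) ≠ q ∧
            ((1 : ℤ), (1 : ℤ)) ≠ r ∧ q ≠ r ∧ Collin ((1 : ℤ), (1 : ℤ)) q r}.ncard : ℝ) := by
  refine ⟨1/1024, by norm_num, 2^40, fun n hn => ?_⟩
  set TS : Set (Finset (ℤ × ℤ)) := {T : Finset (ℤ × ℤ) | ((1 : ℤ), (1 : ℤ)) ∈ T ∧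
      (∀ q ∈ T, inGrid n q) ∧
      ∃ q r : ℤ × ℤ, T = {((1 : ℤ), (1 : ℤ)), q, r} ∧ ((1 : ℤ), (1 : ℤ)) ≠ q ∧
        ((1 : ℤ), (1 : ℤ)) ≠ r ∧ q ≠ r ∧ Collin ((1 : ℤ), (1 : ℤ)) q r} with hTS
  have h40 : (2:ℕ)^40 = 1099511627776 := by norm_num
  have hn2 : 2 ≤ n := by omega
  set L := Nat.log 2 (n-1) with hL
  set I := L - 1 with hI
  set B := (Finset.Icc 6 I).biUnion (fun i => shellF n i) with hB
  have hL39 : 39 ≤ L := by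
    have h39 : (2:ℕ)^39 ≤ n - 1 := by norm_num; omega
    exact (Nat.le_log_iff_pow_le (by norm_num) (by omega)).mpr h39
  -- coverage
  have hcov : ∀ i ∈ Finset.Icc 6 I, 2^(i+1) ≤ n-1 := by
    intro i hi
    rw [Finset.mem_Icc] at hi
    have h1 : i + 1 ≤ L := by omega
    calc 2^(i+1) ≤ 2^L := Nat.pow_le_pow_right (by norm_num) h1
      _ ≤ n - 1 := Nat.pow_log_le_self 2 (by omega)
  -- disjointness of the shells
  have hdisj : ∀ i ∈ Finset.Icc 6 I, ∀ j ∈ Finset.Icc 6 I, i ≠ j →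
      Disjoint (shellF n i) (shellF n j) := by
    intro i _ j _ hij
    rw [Finset.disjoint_left]
    intro x hxi hxj
    obtain ⟨_,_,_,hi1,hi2,_⟩ := mem_shellF hxi
    obtain ⟨_,_,_,hj1,hj2,_⟩ := mem_shellF hxj
    rcases Nat.lt_or_ge i j with h | h
    · have : 2^(i+1) ≤ 2^j := Nat.pow_le_pow_right (by norm_num) (by omega)
      omega
    · have hji : j < i := by omega
      have : 2^(j+1) ≤ 2^i := Nat.pow_le_pow_right (by norm_num) (by omega)
      omega
  have hcardB : B.card = ∑ i ∈ Finset.Icc 6 I, (shellF n i).card :=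
    Finset.card_biUnion hdisj
  -- per-shell bound
  have hshell : ∀ i ∈ Finset.Icc 6 I, ((n-1:ℕ):ℝ)^2/128 ≤ ((shellF n i).card : ℝ) := by
    intro i hi
    have hi6 : 6 ≤ i := (Finset.mem_Icc.mp hi).1
    have h2i : (36:ℕ) ≤ 2^i :=
      le_trans (by norm_num) (Nat.pow_le_pow_right (by norm_num) hi6)
    have hp := pairsK_card (2^i) h2i
    have hpow : 2^(i+1) ≤ n - 1 := hcov i hi
    have hMv1 : 1 ≤ Mv n i := by
      rw [Mv]
      exact (Nat.one_le_div_iff (by positivity)).mpr hpow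
    have hnn : n - 1 ≤ 2^(i+2) * Mv n i := by
      calc n - 1 = 2^(i+1) * Mv n i + (n-1) % 2^(i+1) := by
            rw [Mv]; exact (Nat.div_add_mod (n-1) (2^(i+1))).symm
        _ ≤ 2^(i+1) * Mv n i + 2^(i+1) :=
            Nat.add_le_add_left (le_of_lt (Nat.mod_lt _ (by positivity))) _
        _ ≤ 2^(i+1) * Mv n i + 2^(i+1) * Mv n i :=
            Nat.add_le_add_left (Nat.le_mul_of_pos_right _ (by omega)) _
        _ = 2^(i+2) * Mv n i := by rw [pow_succ 2 (i+1)]; ring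
    have hcards : (shellF n i).card = (pairsK (2^i)).card * (Mv n i * Mv n i) := by
      rw [shellF, Finset.card_product, Finset.card_product, Nat.card_Icc]
      simp
    -- real arithmetic
    set a : ℝ := (2:ℝ)^i with hadef
    set M : ℝ := ((Mv n i : ℕ) : ℝ) with hMdef
    have hpr : a^2/8 ≤ ((pairsK (2^i)).card : ℝ) := by
      have : ((2^i : ℕ) : ℝ) = a := by push_cast; rfl
      rw [← this]; exact hp
    have hMr : ((n-1:ℕ):ℝ) ≤ 4*a*M := by
      have := hnn
      have hc : ((n-1:ℕ):ℝ) ≤ ((2^(i+2) * Mv n i : ℕ):ℝ) := by exact_mod_cast this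
      calc ((n-1:ℕ):ℝ) ≤ ((2^(i+2) * Mv n i : ℕ):ℝ) := hc
        _ = 4*a*M := by push_cast [pow_succ]; ring
    have hM0 : (0:ℝ) ≤ M := by positivity
    have hn0 : (0:ℝ) ≤ ((n-1:ℕ):ℝ) := by positivity
    have h1 : ((n-1:ℕ):ℝ)^2 ≤ (4*a*M)^2 := by
      apply pow_le_pow_left₀ hn0 hMr
    have h2 : a^2/8 * M^2 ≤ ((pairsK (2^i)).card : ℝ) * M^2 :=
      mul_le_mul_of_nonneg_right hpr (sq_nonneg M)
    have h3 : (4*a*M)^2 = 16*(a^2*M^2) := by ring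
    have h4 : a^2/8 * M^2 = (a^2*M^2)/8 := by ring
    have h5 : ((shellF n i).card : ℝ) = ((pairsK (2^i)).card : ℝ) * (M*M) := by
      rw [hcards]; push_cast; ring
    have h6 : ((pairsK (2^i)).card : ℝ) * (M*M) = ((pairsK (2^i)).card : ℝ) * M^2 := by ring
    rw [h5, h6]
    linarith
  -- sum bound
  have hIcc : (Finset.Icc 6 I).card = L - 6 := by
    rw [Nat.card_Icc]; omega
  have hBlow : ((L:ℝ) - 6) * (((n-1:ℕ):ℝ)^2/128) ≤ (B.card : ℝ) := by
    have hsum := Finset.card_nsmul_le_sum (Finset.Icc 6 I)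
      (fun i => ((shellF n i).card : ℝ)) (((n-1:ℕ):ℝ)^2/128) hshell
    rw [hIcc] at hsum
    have hc1 : ((L - 6 : ℕ):ℝ) = (L:ℝ) - 6 := by
      have : 6 ≤ L := by omega
      push_cast [Nat.cast_sub this]
      ring
    have hc2 : ((B.card : ℕ):ℝ) = ∑ i ∈ Finset.Icc 6 I, ((shellF n i).card : ℝ) := by
      rw [hcardB]; push_cast; rfl
    rw [hc2]
    calc ((L:ℝ) - 6) * (((n-1:ℕ):ℝ)^2/128) = ((L-6:ℕ):ℝ) * (((n-1:ℕ):ℝ)^2/128) := by rw [hc1]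
      _ = (L-6:ℕ) • (((n-1:ℕ):ℝ)^2/128) := by rw [nsmul_eq_mul]
      _ ≤ _ := hsum
  -- injectivity
  have hinj : Set.InjOn Fmap ↑B := by
    intro x hx y hy hxy
    rw [Finset.mem_coe, hB, Finset.mem_biUnion] at hx hy
    obtain ⟨ix, _, hx⟩ := hx
    obtain ⟨iy, _, hy⟩ := hy
    obtain ⟨hx1,hx2,hx3,_,_,hx6,_,hx8,_⟩ := mem_shellF hx
    obtain ⟨hy1,hy2,hy3,_,_,hy6,_,hy8,_⟩ := mem_shellF hy
    obtain ⟨⟨j,k⟩,v1,v2⟩ := x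
    obtain ⟨⟨j',k'⟩,v1',v2'⟩ := y
    simp only at hx1 hx2 hx3 hx6 hx8 hy1 hy2 hy3 hy6 hy8
    simp only [Fmap] at hxy
    obtain ⟨e1, e2, e3, e4⟩ := F_inj hx1 hx2 hx3 hx6 hx8 hy1 hy2 hy3 hy6 hy8 hxy
    simp [Prod.ext_iff, e1, e2, e3, e4]
  -- image is inside TS
  have himg : ↑(B.image Fmap) ⊆ TS := by
    intro T hT
    rw [Finset.coe_image, Set.mem_image] at hT
    obtain ⟨x, hx, rfl⟩ := hT
    rw [Finset.mem_coe, hB, Finset.mem_biUnion] at hx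
    obtain ⟨i, _, hx⟩ := hx
    exact Fmap_mem hn2 hx
  -- TS is finite
  have hfin : TS.Finite := by
    apply Set.Finite.subset
      (Finset.finite_toSet ((Finset.Icc ((1:ℤ),(1:ℤ)) ((n:ℤ),(n:ℤ))).powerset))
    intro T hT
    rw [Finset.mem_coe, Finset.mem_powerset]
    intro q hq
    have hg := hT.2.1 q hq
    rw [Finset.mem_Icc]
    obtain ⟨g1, g2, g3, g4⟩ := hg
    exact ⟨⟨g1, g3⟩, ⟨g2, g4⟩⟩
  -- ncard lower bound
  have hncard : (B.card : ℝ) ≤ (TS.ncard : ℝ) := by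
    have h1 : B.card = (B.image Fmap).card := (Finset.card_image_of_injOn hinj).symm
    have h2 : ((B.image Fmap : Finset (Finset (ℤ×ℤ))) : Set (Finset (ℤ×ℤ))).ncard
        ≤ TS.ncard := Set.ncard_le_ncard himg hfin
    rw [Set.ncard_coe_finset] at h2
    exact_mod_cast h1 ▸ h2
  -- logarithm estimates
  have hnpos : (0:ℝ) < (n:ℝ) := by positivity
  have hlogle : Real.log n ≤ ((L:ℝ)+1) * Real.log 2 := by
    have hle : (n:ℝ) ≤ ((2:ℝ))^(L+1) := by
      have h1 : n - 1 < 2^(L+1) := Nat.lt_pow_succ_log_self (by norm_num) (n-1)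
      have h2 : n ≤ 2^(L+1) := by omega
      exact_mod_cast h2
    calc Real.log n ≤ Real.log ((2:ℝ)^(L+1)) := Real.log_le_log hnpos hle
      _ = ((L:ℝ)+1) * Real.log 2 := by rw [Real.log_pow]; push_cast; ring
  have hlog2ub : Real.log 2 < 0.6931471808 := Real.log_two_lt_d9
  have hlog2lb : 0.6931471803 < Real.log 2 := Real.log_two_gt_d9
  have hlognlb : (27:ℝ) ≤ Real.log n := by
    have h1 : ((2:ℝ))^(40:ℕ) ≤ (n:ℝ) := by exact_mod_cast hn
    have h2 : Real.log ((2:ℝ)^(40:ℕ)) ≤ Real.log n := Real.log_le_log (by positivity) h1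
    rw [Real.log_pow] at h2
    push_cast at h2
    nlinarith
  have hLlog : Real.log n ≤ (L:ℝ) - 6 := by
    have hL0 : (0:ℝ) ≤ (L:ℝ) + 1 := by positivity
    have h1 : ((L:ℝ)+1) * Real.log 2 ≤ ((L:ℝ)+1) * 0.6931471808 :=
      mul_le_mul_of_nonneg_left (le_of_lt hlog2ub) hL0
    nlinarith
  -- final arithmetic
  have hnn1 : ((n-1:ℕ):ℝ) = (n:ℝ) - 1 := by
    push_cast [Nat.cast_sub (by omega : 1 ≤ n)]
    ring
  have hhalf : (n:ℝ)/2 ≤ ((n-1:ℕ):ℝ) := by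
    rw [hnn1]
    have : (2:ℝ) ≤ (n:ℝ) := by exact_mod_cast hn2
    linarith
  have t1 : ((n:ℝ)/2)^2 ≤ ((n-1:ℕ):ℝ)^2 := pow_le_pow_left₀ (by positivity) hhalf 2
  have t2 : Real.log n * (((n:ℝ)/2)^2) ≤ ((L:ℝ) - 6) * ((n-1:ℕ):ℝ)^2 := by
    apply mul_le_mul hLlog t1 (by positivity) (by linarith)
  have t3 : Real.log n * (((n:ℝ)/2)^2) = (n:ℝ)^2 * Real.log n / 4 := by ring
  have t4 : (0:ℝ) ≤ (n:ℝ)^2 * Real.log n := by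
    apply mul_nonneg (by positivity)
    linarith
  calc (1/1024) * (n:ℝ)^2 * Real.log n
      ≤ (n:ℝ)^2 * Real.log n / 4 / 128 := by linarith
    _ = Real.log n * (((n:ℝ)/2)^2) / 128 := by rw [t3]
    _ ≤ ((L:ℝ) - 6) * ((n-1:ℕ):ℝ)^2 / 128 := by linarith
    _ = ((L:ℝ) - 6) * (((n-1:ℕ):ℝ)^2/128) := by ring
    _ ≤ (B.card : ℝ) := hBlow
    _ ≤ (TS.ncard : ℝ) := hncard
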